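/- arXiv:2512.15412 — 2 statements merged into one kernel-verified Lean document; each statement's English description precedes it below -/
import Mathlib

section
/- Let ψ ∈ ℂⁿ be a unit vector, ρ := ψψᴴ, C an arbitrary n×n complex matrix, and A := (C + Cᴴ)/2. Then ⁅ ⁅AC + CᴴA, ρ⁆ + (1/2)(C² − (Cᴴ)²), ρ ⁆ = C²ρ + ρ(Cᴴ)² + (CᴴC)ρ + ρ(CᴴC) − 2·tr((AC + CᴴA)ρ)·ρ. That is, the dissipative part of the stochastic master equation, {C², ρ}_c + {C†C, ρ} − 2⟨{C^H, C}_c⟩ρ, can be written as a commutator with the state, defining the dissipation Hamiltonian of the monitored dynamics. -/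
open Matrix

lemma rho_idem {n : ℕ} (ψ : Fin n → ℂ) (hψ : star ψ ⬝ᵥ ψ = 1) :
    vecMulVec ψ (star ψ) * vecMulVec ψ (star ψ) = vecMulVec ψ (star ψ) := by
  ext i j
  have h : ∑ k, star ψ k * ψ k = 1 := hψ
  simp only [mul_apply, vecMulVec_apply]
  calc ∑ k, ψ i * star ψ k * (ψ k * star ψ j)
      = (ψ i * star ψ j) * ∑ k, star ψ k * ψ k := by
        rw [Finset.mul_sum]; congr 1; ext k; ring
    _ = ψ i * star ψ j := by rw [h, mul_one]

lemma rho_sandwich {n : ℕ} (ψ : Fin n → ℂ) (X : Matrix (Fin n) (Fin n) ℂ) :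
    vecMulVec ψ (star ψ) * X * vecMulVec ψ (star ψ)
      = (X * vecMulVec ψ (star ψ)).trace • vecMulVec ψ (star ψ) := by
  ext i j
  simp only [mul_apply, vecMulVec_apply, trace, diag_apply, Matrix.smul_apply, smul_eq_mul,
    Finset.sum_mul, Finset.mul_sum]
  rw [Finset.sum_comm]
  congr 1; ext k; congr 1; ext l; ring

/-- For a pure state `ρ = ψψᴴ` with `ψ` a unit vector and an arbitrary jump
operator `C` with Hermitian part `A = (C + Cᴴ)/2`, the dissipative part of the
stochastic master equation is a commutator with the state:
`⁅⁅AC + CᴴA, ρ⁆ + (1/2)(C² − (Cᴴ)²), ρ⁆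
  = C²ρ + ρ(Cᴴ)² + (CᴴC)ρ + ρ(CᴴC) − 2·tr((AC + CᴴA)ρ)·ρ`. -/
theorem dissipation_hamiltonian
    (n : ℕ) (ψ : Fin n → ℂ) (hψ : star ψ ⬝ᵥ ψ = 1)
    (C : Matrix (Fin n) (Fin n) ℂ) :
    let ρ : Matrix (Fin n) (Fin n) ℂ := vecMulVec ψ (star ψ)
    let A : Matrix (Fin n) (Fin n) ℂ := ((1 : ℂ) / 2) • (C + Cᴴ)
    ⁅⁅A * C + Cᴴ * A, ρ⁆ + ((1 : ℂ) / 2) • (C ^ 2 - Cᴴ ^ 2), ρ⁆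
      = C ^ 2 * ρ + ρ * Cᴴ ^ 2 + (Cᴴ * C) * ρ + ρ * (Cᴴ * C)
        - (2 * ((A * C + Cᴴ * A) * ρ).trace) • ρ := by
  intro ρ A
  set B : Matrix (Fin n) (Fin n) ℂ := A * C + Cᴴ * A with hB
  set D : Matrix (Fin n) (Fin n) ℂ := ((1 : ℂ) / 2) • (C ^ 2 - Cᴴ ^ 2) with hD
  have hidem : ρ * ρ = ρ := rho_idem ψ hψ
  have hsand : ρ * B * ρ = (B * ρ).trace • ρ := rho_sandwich ψ _
  have hBD : B + D = C ^ 2 + Cᴴ * C := by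
    simp only [hB, hD, A, smul_mul_assoc, mul_smul_comm, add_mul, mul_add, pow_two]
    module
  have hBD' : B - D = Cᴴ ^ 2 + Cᴴ * C := by
    simp only [hB, hD, A, smul_mul_assoc, mul_smul_comm, add_mul, mul_add, pow_two]
    module
  simp only [Ring.lie_def]
  have step1 : (B * ρ - ρ * B + D) * ρ - ρ * (B * ρ - ρ * B + D)
      = (B + D) * ρ + ρ * (B - D) - (ρ * B * ρ + ρ * B * ρ) := by
    have expand : (B * ρ - ρ * B + D) * ρ - ρ * (B * ρ - ρ * B + D)
        = B * (ρ * ρ) + (ρ * ρ) * B + D * ρ - ρ * D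
          - (ρ * B * ρ + ρ * B * ρ) := by noncomm_ring
    rw [expand, hidem]
    simp only [hB, add_mul, mul_sub, mul_add]
    abel
  rw [step1, hBD, hBD', hsand]
  have : (2 * (B * ρ).trace) • ρ = (B * ρ).trace • ρ + (B * ρ).trace • ρ := by
    rw [two_mul, add_smul]
  rw [this, add_mul, mul_add]
  abel
end

section
/- Let ψ, q ∈ ℂⁿ be unit vectors, ρ := ψψᴴ, Q := qqᴴ, and let Z be an arbitrary n×n complex matrix. Then tr( ⁅⁅Z, ρ − Q⁆, ρ⁆ · Q ) = 2·tr((ZQ + QZ)ρ) − 2·(tr(Zρ) + tr(ZQ))·tr(Qρ). That is, the instantaneous change of the target overlap Q_∥ = tr(Qρ) under the state-agnostic feedback generator [[Z, ρ − Q], ρ] equals 2⟨{Z, Q}⟩_ρ − 2(⟨Z⟩_ρ + ⟨Z⟩_q)·Q_∥. -/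
open Matrix

variable {n : ℕ}

lemma vecMulVec_mul' (a b : Fin n → ℂ) (M : Matrix (Fin n) (Fin n) ℂ) :
    vecMulVec a b * M = vecMulVec a (b ᵥ* M) := by
  ext i j
  simp [vecMulVec_apply, mul_apply, vecMul, dotProduct, Finset.mul_sum, mul_assoc]

lemma trace_vecMulVec (a b : Fin n → ℂ) : (vecMulVec a b).trace = b ⬝ᵥ a := by
  simp [Matrix.trace, vecMulVec_apply, dotProduct, mul_comm, Matrix.diag]

lemma trace_mul_vecMulVec (Z : Matrix (Fin n) (Fin n) ℂ) (a b : Fin n → ℂ) :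
    (Z * vecMulVec a b).trace = b ⬝ᵥ (Z *ᵥ a) := by
  rw [trace_mul_comm, vecMulVec_mul', trace_vecMulVec]
  simp [dotProduct, vecMul, mulVec, dotProduct, Finset.sum_mul, Finset.mul_sum, mul_comm, mul_left_comm]
  rw [Finset.sum_comm]

lemma vecMul_vecMulVec (x a b : Fin n → ℂ) :
    x ᵥ* vecMulVec a b = (x ⬝ᵥ a) • b := by
  ext j; simp [vecMul, vecMulVec_apply, dotProduct, Finset.sum_mul, mul_assoc]

/-- For pure states `ρ = ψψᴴ` and `Q = qqᴴ` (with `ψ`, `q` unit vectors) and any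
operator `Z`, the instantaneous change of the target overlap `tr(Qρ)` under the
state-agnostic feedback generator `[[Z, ρ − Q], ρ]` is
`tr(⁅⁅Z, ρ − Q⁆, ρ⁆ Q) = 2 tr((ZQ + QZ)ρ) − 2 (tr(Zρ) + tr(ZQ)) tr(Qρ)`. -/
theorem overlap_evolution_state_agnostic_feedback
    (n : ℕ) (ψ q : Fin n → ℂ)
    (hψ : star ψ ⬝ᵥ ψ = 1) (hq : star q ⬝ᵥ q = 1)
    (Z : Matrix (Fin n) (Fin n) ℂ) :
    let ρ : Matrix (Fin n) (Fin n) ℂ := vecMulVec ψ (star ψ)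
    let Q : Matrix (Fin n) (Fin n) ℂ := vecMulVec q (star q)
    (⁅⁅Z, ρ - Q⁆, ρ⁆ * Q).trace
      = 2 * ((Z * Q + Q * Z) * ρ).trace
        - 2 * ((Z * ρ).trace + (Z * Q).trace) * (Q * ρ).trace := by
  intro ρ Q
  show (((Z * (ρ - Q) - (ρ - Q) * Z) * ρ - ρ * (Z * (ρ - Q) - (ρ - Q) * Z)) * Q).trace = _
  simp only [ρ, Q, sub_mul, mul_sub, mul_assoc, vecMulVec_mul', vecMul_vecMulVec,
    Matrix.mul_smul, Matrix.smul_mul, smul_vecMul, ← vecMul_vecMul, vecMul_add, add_vecMul, add_dotProduct, dotProduct_add, mul_add, add_mul, trace_sub, trace_add,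
    trace_smul, trace_vecMulVec, trace_mul_vecMulVec, mulVec_smul, dotProduct_smul,
    smul_dotProduct, smul_eq_mul, dotProduct_mulVec, hψ, hq, one_mul, mul_one]
  ring_nf
end
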